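/- Let A be an invertible real n×n matrix, b ∈ ℝ^n, φ(θ) = Aθ + b. Let π : ℝ^n → (0,∞) be differentiable and ρ : ℝ × ℝ^n → (0,∞) be differentiable in t and in θ. Let k, k̃ : ℝ × ℝ^n × ℝ^n → ℝ and Q, Q̃ : ℝ × ℝ^n × ℝ^n → ℝ^{n×n} satisfy k̃(t, φ(θ), φ(θ'))·Q̃(t, φ(θ), φ(θ')) = k(t, θ, θ')·A·Q(t, θ, θ')·Aᵀ for all t, θ, θ'. Define the pushforward densities ρ̃(t,x) = ρ(t, A⁻¹(x−b))·|det A|⁻¹ and π̃(x) = π(A⁻¹(x−b))·|det A|⁻¹. Assume that for each (t,θ) the function θ' ↦ k(t,θ,θ')·Q(t,θ,θ')·(∇log ρ(t,θ') − ∇log π(θ'))·ρ(t,θ') is Lebesgue-integrable, that the vector field V_t(θ) = ρ(t,θ)·∫ k(t,θ,θ')·Q(t,θ,θ')·(∇_{θ'}log ρ(t,θ') − ∇_{θ'}log π(θ'))·ρ(t,θ') dθ' is differentiable in θ, and that ∂_t ρ(t,θ) = div_θ V_t(θ) for all (t,θ). Then Ṽ_t(x) = ρ̃(t,x)·∫ k̃(t,x,x')·Q̃(t,x,x')·(∇log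 ρ̃(t,x') − ∇log π̃(x'))·ρ̃(t,x') dx' satisfies Ṽ_t(φ(θ)) = |det A|⁻¹·A·V_t(θ), is differentiable in x, and ∂_t ρ̃(t,x) = div_x Ṽ_t(x) for all (t,x). -/

import Mathlib

open Matrix MeasureTheory

/-- The Euclidean gradient of `f : ℝ^n → ℝ`, as the vector of partial derivatives. -/
noncomputable def grad {n : ℕ} (f : (Fin n → ℝ) → ℝ) (θ : Fin n → ℝ) : Fin n → ℝ :=
  fun i => fderiv ℝ f θ (Pi.single i 1)

/-- The divergence `div g = ∑ i ∂gᵢ/∂θᵢ` of a vector field `g : ℝ^n → ℝ^n`. -/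
noncomputable def diverg {n : ℕ} (g : (Fin n → ℝ) → Fin n → ℝ) (θ : Fin n → ℝ) : ℝ :=
  ∑ i, fderiv ℝ g θ (Pi.single i 1) i

section Helpers

variable {n : ℕ}

noncomputable def mCLM (M : Matrix (Fin n) (Fin n) ℝ) : (Fin n → ℝ) →L[ℝ] (Fin n → ℝ) :=
  LinearMap.toContinuousLinearMap M.mulVecLin

@[simp] lemma mCLM_apply (M : Matrix (Fin n) (Fin n) ℝ) (v : Fin n → ℝ) :
    mCLM M v = M.mulVec v := rfl

lemma hasFDerivAt_psi (M : Matrix (Fin n) (Fin n) ℝ) (b x : Fin n → ℝ) :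
    HasFDerivAt (fun y => M.mulVec (y - b)) (mCLM M) x := by
  have h := (mCLM M).hasFDerivAt.comp x ((hasFDerivAt_id x).sub_const b)
  simpa [Function.comp] using h

lemma clm_eq_sum {E : Type*} [NormedAddCommGroup E] [NormedSpace ℝ E]
    (D : (Fin n → ℝ) →L[ℝ] E) (v : Fin n → ℝ) :
    D v = ∑ i, v i • D (Pi.single i 1) := by
  have hv : v = ∑ i, v i • (Pi.single i 1 : Fin n → ℝ) := by
    funext j
    simp [Finset.sum_apply, Pi.single_apply]
  calc D v = D (∑ i, v i • (Pi.single i 1 : Fin n → ℝ)) := by rw [← hv]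
    _ = ∑ i, v i • D (Pi.single i 1) := by rw [map_sum]; simp

lemma grad_log_affine (A : Matrix (Fin n) (Fin n) ℝ) (hA : IsUnit A.det) (b : Fin n → ℝ)
    (f : (Fin n → ℝ) → ℝ) (hf : Differentiable ℝ f) (hfpos : ∀ x, 0 < f x)
    (c : ℝ) (hc : 0 < c) (θ : Fin n → ℝ) :
    grad (fun y => Real.log (f (A⁻¹.mulVec (y - b)) * c)) (A.mulVec θ + b)
      = A⁻¹ᵀ.mulVec (grad (fun y => Real.log (f y)) θ) := by
  set x := A.mulVec θ + b with hx
  have hψφ : A⁻¹.mulVec (x - b) = θ := by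
    simp [hx, Matrix.mulVec_mulVec, Matrix.nonsing_inv_mul A hA]
  have hg : HasFDerivAt (fun y => Real.log (f y)) ((f θ)⁻¹ • fderiv ℝ f θ) θ :=
    ((hf θ).hasFDerivAt).log (hfpos θ).ne'
  have hg' : HasFDerivAt (fun y => Real.log (f y)) ((f θ)⁻¹ • fderiv ℝ f θ)
      (A⁻¹.mulVec (x - b)) := by rw [hψφ]; exact hg
  have hcomp := hg'.comp x (hasFDerivAt_psi A⁻¹ b x)
  have hfun : (fun y => Real.log (f (A⁻¹.mulVec (y - b)) * c))
      = fun y => Real.log (f (A⁻¹.mulVec (y - b))) + Real.log c :=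
    funext fun y => Real.log_mul (hfpos _).ne' hc.ne'
  have hfin : HasFDerivAt (fun y => Real.log (f (A⁻¹.mulVec (y - b)) * c))
      (((f θ)⁻¹ • fderiv ℝ f θ).comp (mCLM A⁻¹)) x := by
    rw [hfun]
    simpa [Function.comp] using hcomp.add_const (Real.log c)
  unfold grad
  rw [hfin.fderiv, hg.fderiv]
  funext i
  have h1 : (((f θ)⁻¹ • fderiv ℝ f θ).comp (mCLM A⁻¹)) (Pi.single i 1)
      = ((f θ)⁻¹ • fderiv ℝ f θ) (A⁻¹.mulVec (Pi.single i 1)) := rfl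
  rw [h1, clm_eq_sum ((f θ)⁻¹ • fderiv ℝ f θ) (A⁻¹.mulVec (Pi.single i 1))]
  simp [Matrix.mulVec, dotProduct, Matrix.transpose_apply, mul_comm, Pi.single_apply,
    mul_ite, mul_one, mul_zero, Finset.sum_ite_eq', Finset.sum_ite_eq]

lemma diverg_affine (A : Matrix (Fin n) (Fin n) ℝ) (hA : IsUnit A.det) (b : Fin n → ℝ)
    (g : (Fin n → ℝ) → (Fin n → ℝ)) (hg : Differentiable ℝ g) (c : ℝ) (x : Fin n → ℝ) :
    diverg (fun y => c • A.mulVec (g (A⁻¹.mulVec (y - b)))) x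
      = c * diverg g (A⁻¹.mulVec (x - b)) := by
  set θ := A⁻¹.mulVec (x - b) with hθ
  set D := fderiv ℝ g θ with hD
  have h1 : HasFDerivAt (fun y => A⁻¹.mulVec (y - b)) (mCLM A⁻¹) x := hasFDerivAt_psi A⁻¹ b x
  have h2 : HasFDerivAt g D θ := (hg θ).hasFDerivAt
  have h3 := h2.comp x h1
  have h4 := (mCLM A).hasFDerivAt.comp x h3
  have h5 : HasFDerivAt (fun y => c • A.mulVec (g (A⁻¹.mulVec (y - b))))
      (c • ((mCLM A).comp (D.comp (mCLM A⁻¹)))) x := by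
    simpa [Function.comp] using h4.const_smul c
  unfold diverg
  rw [h5.fderiv]
  have key : ∀ i : Fin n, ((c • ((mCLM A).comp (D.comp (mCLM A⁻¹)))) (Pi.single i 1)) i
      = c * ∑ l, ∑ j, A⁻¹ l i * A i j * D (Pi.single l 1) j := by
    intro i
    have e1 : (D.comp (mCLM A⁻¹)) (Pi.single i 1) = D (A⁻¹.mulVec (Pi.single i 1)) := rfl
    have e2 : D (A⁻¹.mulVec (Pi.single i 1)) = ∑ l, A⁻¹ l i • D (Pi.single l 1) := by
      rw [clm_eq_sum D]
      simp [Matrix.mulVec_single]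
    simp only [ContinuousLinearMap.coe_smul', Pi.smul_apply, ContinuousLinearMap.coe_comp',
      Function.comp_apply, mCLM_apply, smul_eq_mul]
    rw [e2]
    congr 1
    simp only [Matrix.mulVec, dotProduct, Finset.sum_apply, Pi.smul_apply, smul_eq_mul,
      Finset.mul_sum]
    rw [Finset.sum_comm]
    refine Finset.sum_congr rfl fun l _ => Finset.sum_congr rfl fun j _ => by ring
  simp_rw [key]
  rw [← Finset.mul_sum]
  congr 1
  rw [Finset.sum_comm]
  have : ∀ l, ∑ i, ∑ j, A⁻¹ l i * A i j * D (Pi.single l 1) j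
      = ∑ j, (∑ i, A⁻¹ l i * A i j) * D (Pi.single l 1) j := by
    intro l
    rw [Finset.sum_comm]
    congr 1; funext j
    rw [Finset.sum_mul]
  simp_rw [this, ← Matrix.mul_apply, Matrix.nonsing_inv_mul A hA]
  simp [Matrix.one_apply]
  rfl

noncomputable def affineMeasEquiv (A : Matrix (Fin n) (Fin n) ℝ) (hA : IsUnit A.det)
    (b : Fin n → ℝ) : (Fin n → ℝ) ≃ᵐ (Fin n → ℝ) where
  toFun := fun θ => A.mulVec θ + b
  invFun := fun x => A⁻¹.mulVec (x - b)
  left_inv := fun θ => by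
    simp [Matrix.mulVec_mulVec, Matrix.nonsing_inv_mul A hA]
  right_inv := fun x => by
    simp [Matrix.mulVec_mulVec, Matrix.mul_nonsing_inv A hA]
  measurable_toFun := (((mCLM A).continuous.add continuous_const)).measurable
  measurable_invFun := ((mCLM A⁻¹).continuous.comp
    (continuous_id.sub continuous_const)).measurable

lemma integral_affine (A : Matrix (Fin n) (Fin n) ℝ) (hA : IsUnit A.det) (b : Fin n → ℝ)
    (f : (Fin n → ℝ) → (Fin n → ℝ)) :
    ∫ x, f x = |A.det| • ∫ θ, f (A.mulVec θ + b) := by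
  have hdet : A.det ≠ 0 := by
    intro h; rw [h] at hA; exact (by simpa using hA : IsUnit (0:ℝ)).ne_zero rfl
  set e := affineMeasEquiv A hA b with he
  have hfun : (⇑e : (Fin n → ℝ) → (Fin n → ℝ)) = (fun y => y + b) ∘ (Matrix.toLin' A) := by
    funext θ
    simp only [he, Function.comp_apply, Matrix.toLin'_apply]
    rfl
  have hmap : Measure.map (⇑e) volume = ENNReal.ofReal |A.det|⁻¹ • volume := by
    rw [hfun, ← Measure.map_map (measurable_add_const b)
      (by exact (mCLM A).continuous.measurable : Measurable (Matrix.toLin' A))]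
    rw [Real.map_matrix_volume_pi_eq_smul_volume_pi hdet, Measure.map_smul,
      map_add_right_eq_self volume b, abs_inv]
  calc ∫ x, f x
      = ∫ x, f x ∂((ENNReal.ofReal |A.det|) • Measure.map (⇑e) volume) := by
        rw [hmap, smul_smul, ← ENNReal.ofReal_mul (abs_nonneg _),
          mul_inv_cancel₀ (abs_ne_zero.2 hdet), ENNReal.ofReal_one, one_smul]
    _ = |A.det| • ∫ x, f x ∂(Measure.map (⇑e) volume) := by
        rw [integral_smul_measure, ENNReal.toReal_ofReal (abs_nonneg _)]
    _ = |A.det| • ∫ θ, f (A.mulVec θ + b) := by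
        rw [integral_map_equiv]
        rfl

end Helpers

/-- Affine invariance of the preconditioned Stein gradient flow
`∂_t ρ(t,θ) = ∇·(ρ(t,θ) ∫ k(t,θ,θ') Q(t,θ,θ') (∇log ρ(t,θ') − ∇log p(θ')) ρ(t,θ') dθ')`:
if `k̃(t,Aθ+b,Aθ'+b) Q̃(t,Aθ+b,Aθ'+b) = k(t,θ,θ') A Q(t,θ,θ') Aᵀ`, then the
pushforward densities satisfy the same equation with kernel `k̃` and
preconditioner `Q̃`, the transformed flux satisfying `Ṽ_t(Aθ+b) = |det A|⁻¹ A V_t(θ)`. -/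
theorem preconditioned_stein_flow_affine_invariant
    (n : ℕ) (A : Matrix (Fin n) (Fin n) ℝ) (hA : IsUnit A.det) (b : Fin n → ℝ)
    (p : (Fin n → ℝ) → ℝ) (ρ : ℝ → (Fin n → ℝ) → ℝ)
    (hppos : ∀ x, 0 < p x) (hρpos : ∀ t x, 0 < ρ t x)
    (hpdiff : Differentiable ℝ p)
    (hρt : ∀ θ, ∀ t : ℝ, DifferentiableAt ℝ (fun s => ρ s θ) t)
    (hρθ : ∀ t : ℝ, Differentiable ℝ (ρ t))
    (k kA : ℝ → (Fin n → ℝ) → (Fin n → ℝ) → ℝ)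
    (Q QA : ℝ → (Fin n → ℝ) → (Fin n → ℝ) → Matrix (Fin n) (Fin n) ℝ)
    (hkQ : ∀ t θ θ', kA t (A.mulVec θ + b) (A.mulVec θ' + b) •
        QA t (A.mulVec θ + b) (A.mulVec θ' + b) = k t θ θ' • (A * Q t θ θ' * Aᵀ))
    (pA : (Fin n → ℝ) → ℝ)
    (hpA : ∀ x, pA x = p (A⁻¹.mulVec (x - b)) * |A.det|⁻¹)
    (ρA : ℝ → (Fin n → ℝ) → ℝ)
    (hρA : ∀ t x, ρA t x = ρ t (A⁻¹.mulVec (x - b)) * |A.det|⁻¹)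
    (hint : ∀ t θ, Integrable fun θ' => (k t θ θ' * ρ t θ') • (Q t θ θ').mulVec
        (grad (fun y => Real.log (ρ t y)) θ' - grad (fun y => Real.log (p y)) θ'))
    (V : ℝ → (Fin n → ℝ) → Fin n → ℝ)
    (hV : ∀ t θ, V t θ = ρ t θ • ∫ θ', (k t θ θ' * ρ t θ') • (Q t θ θ').mulVec
        (grad (fun y => Real.log (ρ t y)) θ' - grad (fun y => Real.log (p y)) θ'))
    (hVdiff : ∀ t : ℝ, Differentiable ℝ (V t))
    (hflow : ∀ t θ, HasDerivAt (fun s => ρ s θ) (diverg (V t) θ) t)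
    (VA : ℝ → (Fin n → ℝ) → Fin n → ℝ)
    (hVA : ∀ t x, VA t x = ρA t x • ∫ x', (kA t x x' * ρA t x') • (QA t x x').mulVec
        (grad (fun y => Real.log (ρA t y)) x' - grad (fun y => Real.log (pA y)) x')) :
    (∀ t θ, VA t (A.mulVec θ + b) = |A.det|⁻¹ • A.mulVec (V t θ)) ∧
    (∀ t : ℝ, Differentiable ℝ (VA t)) ∧
    (∀ t x, HasDerivAt (fun s => ρA s x) (diverg (VA t) x) t) := by
  have hdet : A.det ≠ 0 := isUnit_iff_ne_zero.mp hA
  set c : ℝ := |A.det|⁻¹ with hc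
  have hcpos : 0 < c := by rw [hc]; exact inv_pos.2 (abs_pos.2 hdet)
  have hinv : A⁻¹ * A = 1 := Matrix.nonsing_inv_mul A hA
  have hinv' : A * A⁻¹ = 1 := Matrix.mul_nonsing_inv A hA
  have hAt : Aᵀ * A⁻¹ᵀ = 1 := by rw [← Matrix.transpose_mul, hinv, Matrix.transpose_one]
  have hφψ : ∀ x : Fin n → ℝ, A.mulVec (A⁻¹.mulVec (x - b)) + b = x := fun x => by
    simp [Matrix.mulVec_mulVec, hinv']
  have hψφ : ∀ θ : Fin n → ℝ, A⁻¹.mulVec (A.mulVec θ + b - b) = θ := fun θ => by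
    simp [Matrix.mulVec_mulVec, hinv]
  have part1 : ∀ t θ, VA t (A.mulVec θ + b) = c • A.mulVec (V t θ) := by
    intro t θ
    have hgradρ : ∀ θ' : Fin n → ℝ, grad (fun y => Real.log (ρA t y)) (A.mulVec θ' + b)
        = A⁻¹ᵀ.mulVec (grad (fun y => Real.log (ρ t y)) θ') := by
      intro θ'
      have h : (fun y => Real.log (ρA t y))
          = fun y => Real.log (ρ t (A⁻¹.mulVec (y - b)) * c) := by
        funext y; rw [hρA, hc]
      rw [h]
      exact grad_log_affine A hA b (ρ t) (hρθ t) (hρpos t) c hcpos θ'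
    have hgradp : ∀ θ' : Fin n → ℝ, grad (fun y => Real.log (pA y)) (A.mulVec θ' + b)
        = A⁻¹ᵀ.mulVec (grad (fun y => Real.log (p y)) θ') := by
      intro θ'
      have h : (fun y => Real.log (pA y))
          = fun y => Real.log (p (A⁻¹.mulVec (y - b)) * c) := by
        funext y; rw [hpA, hc]
      rw [h]
      exact grad_log_affine A hA b p hpdiff hppos c hcpos θ'
    have hintg : ∀ θ' : Fin n → ℝ,
        (kA t (A.mulVec θ + b) (A.mulVec θ' + b) * ρA t (A.mulVec θ' + b)) •
          (QA t (A.mulVec θ + b) (A.mulVec θ' + b)).mulVec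
            (grad (fun y => Real.log (ρA t y)) (A.mulVec θ' + b)
              - grad (fun y => Real.log (pA y)) (A.mulVec θ' + b))
        = c • A.mulVec ((k t θ θ' * ρ t θ') • (Q t θ θ').mulVec
            (grad (fun y => Real.log (ρ t y)) θ' - grad (fun y => Real.log (p y)) θ')) := by
      intro θ'
      have hρA' : ρA t (A.mulVec θ' + b) = ρ t θ' * c := by rw [hρA, hψφ, hc]
      set w := grad (fun y => Real.log (ρ t y)) θ' - grad (fun y => Real.log (p y)) θ' with hw
      rw [hgradρ θ', hgradp θ', hρA', ← Matrix.mulVec_sub, ← hw, Matrix.mulVec_mulVec]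
      have hM : kA t (A.mulVec θ + b) (A.mulVec θ' + b) •
          (QA t (A.mulVec θ + b) (A.mulVec θ' + b) * A⁻¹ᵀ)
          = k t θ θ' • (A * Q t θ θ') := by
        have h := congrArg (· * A⁻¹ᵀ) (hkQ t θ θ')
        simpa [Matrix.smul_mul, Matrix.mul_assoc, hAt] using h
      have hv : kA t (A.mulVec θ + b) (A.mulVec θ' + b) •
          ((QA t (A.mulVec θ + b) (A.mulVec θ' + b) * A⁻¹ᵀ).mulVec w)
          = k t θ θ' • (A.mulVec ((Q t θ θ').mulVec w)) := by
        rw [← Matrix.smul_mulVec, hM, Matrix.smul_mulVec, ← Matrix.mulVec_mulVec]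
      calc (kA t (A.mulVec θ + b) (A.mulVec θ' + b) * (ρ t θ' * c)) •
            (QA t (A.mulVec θ + b) (A.mulVec θ' + b) * A⁻¹ᵀ).mulVec w
          = (ρ t θ' * c) • kA t (A.mulVec θ + b) (A.mulVec θ' + b) •
            (QA t (A.mulVec θ + b) (A.mulVec θ' + b) * A⁻¹ᵀ).mulVec w := by
            rw [smul_smul, mul_comm]
        _ = (ρ t θ' * c) • k t θ θ' • (A.mulVec ((Q t θ θ').mulVec w)) := by rw [hv]
        _ = c • A.mulVec ((k t θ θ' * ρ t θ') • (Q t θ θ').mulVec w) := by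
            simp only [Matrix.mulVec_smul, smul_smul]
            congr 1
            ring
    rw [hVA, hV]
    have hρAθ : ρA t (A.mulVec θ + b) = ρ t θ * c := by rw [hρA, hψφ, hc]
    rw [hρAθ, integral_affine A hA b]
    simp only [hintg]
    have hpull : (∫ θ', c • A.mulVec ((k t θ θ' * ρ t θ') • (Q t θ θ').mulVec
          (grad (fun y => Real.log (ρ t y)) θ' - grad (fun y => Real.log (p y)) θ')))
        = c • A.mulVec (∫ θ', (k t θ θ' * ρ t θ') • (Q t θ θ').mulVec
          (grad (fun y => Real.log (ρ t y)) θ' - grad (fun y => Real.log (p y)) θ')) := by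
      rw [integral_smul]
      congr 1
      exact (mCLM A).integral_comp_comm (hint t θ)
    rw [hpull, Matrix.mulVec_smul]
    simp only [smul_smul]
    congr 1
    rw [hc]
    field_simp
  have VAeq : ∀ t x, VA t x = c • A.mulVec (V t (A⁻¹.mulVec (x - b))) := by
    intro t x
    have h := part1 t (A⁻¹.mulVec (x - b))
    rwa [hφψ x] at h
  refine ⟨part1, ?_, ?_⟩
  · intro t
    have h : VA t = fun x => c • A.mulVec (V t (A⁻¹.mulVec (x - b))) := funext (VAeq t)
    rw [h]
    have h1 : Differentiable ℝ fun x : Fin n → ℝ => A⁻¹.mulVec (x - b) :=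
      fun x => (hasFDerivAt_psi A⁻¹ b x).differentiableAt
    exact (((mCLM A).differentiable.comp ((hVdiff t).comp h1)).const_smul c)
  · intro t x
    have hfun : (fun s => ρA s x) = fun s => ρ s (A⁻¹.mulVec (x - b)) * c := by
      funext s; rw [hρA, hc]
    have hdiv : diverg (VA t) x = c * diverg (V t) (A⁻¹.mulVec (x - b)) := by
      have h : VA t = fun y => c • A.mulVec (V t (A⁻¹.mulVec (y - b))) := funext (VAeq t)
      rw [h]
      exact diverg_affine A hA b (V t) (hVdiff t) c x
    rw [hfun, hdiv]
    have h := (hflow t (A⁻¹.mulVec (x - b))).mul_const c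
    simpa [mul_comm] using h
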